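/- Let M →σ P ←τ N be a quasi-coherent representation. Suppose M = ⊕_{i∈I} M_i is an internal direct sum of countably generated R-submodules and N = ⊕_{j∈J} N_j is an internal direct sum of countably generated R'-submodules. Then for every countable subset I₀ ⊆ I and every countable subset J₀ ⊆ J there exist countable subsets Ī ⊆ I and J̄ ⊆ J with I₀ ⊆ Ī and J₀ ⊆ J̄ such that the L-submodule of P generated by σ(Σ_{i∈Ī} M_i) is equal to the L-submodule of P generated by τ(Σ_{j∈J̄} N_j). -/

import Mathlib

/-!
Setup (context of the paper): a quasi-coherent sheaf on `P¹(k)` is identified with a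
quasi-coherent representation `M →σ P ←τ N` where `M` is a module over `R = k[X]`,
`N` is a module over `R' = k[Y]` (with `Y` playing the role of `X⁻¹`), `P` is a module
over the Laurent polynomial ring `L = k[X,X⁻¹]`, `σ` exhibits `P` as the localization of
`M` at the powers of `X` and `τ` exhibits `P` as the localization of `N` at the powers
of `Y`.
-/

noncomputable section

open Polynomial LaurentPolynomial

/-- `R' = k[Y]`, a second copy of the polynomial ring over `k`. -/
def RPrime (k : Type*) [Field k] : Type _ := Polynomial k

instance (k : Type*) [Field k] : CommRing (RPrime k) :=
  inferInstanceAs (CommRing (Polynomial k))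

/-- The variable `Y` of `R' = k[Y]`. -/
def Yvar (k : Type*) [Field k] : RPrime k := (Polynomial.X : Polynomial k)

/-- `L = k[X,X⁻¹]` is an `R'`-algebra via `Y ↦ X⁻¹`. -/
instance (k : Type*) [Field k] : Algebra (RPrime k) (LaurentPolynomial k) :=
  RingHom.toAlgebra
    (show Polynomial k →+* LaurentPolynomial k from
      (Polynomial.aeval (LaurentPolynomial.T (-1) : LaurentPolynomial k)).toRingHom)

section zigzag

variable {A L M P : Type*} [CommRing A] [CommRing L] [Algebra A L]
  [AddCommGroup M] [Module A M] [AddCommGroup P] [Module L P] [Module A P]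
  [IsScalarTower A L P]

/-- The `L`-span of the image under `f` of the sum of the submodules indexed by `s`. -/
def zspan (f : M →ₗ[A] P) {I : Type*} (Mi : I → Submodule A M) (s : Set I) :
    Submodule L P :=
  Submodule.span L (⇑f '' ↑(⨆ i ∈ s, Mi i))

lemma zspan_mono (f : M →ₗ[A] P) {I : Type*} (Mi : I → Submodule A M) {s t : Set I}
    (h : s ⊆ t) : zspan (L := L) f Mi s ≤ zspan f Mi t := by
  apply Submodule.span_mono
  apply Set.image_mono
  exact_mod_cast biSup_mono h

lemma span_image_span (f : M →ₗ[A] P) (s : Set M) :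
    Submodule.span L (⇑f '' ↑(Submodule.span A s)) = Submodule.span L (⇑f '' s) := by
  apply le_antisymm
  · rw [Submodule.span_le, Set.image_subset_iff]
    have h : Submodule.span A s ≤
        (Submodule.restrictScalars A (Submodule.span L (⇑f '' s))).comap f := by
      rw [Submodule.span_le]
      intro x hx
      exact Submodule.subset_span (Set.mem_image_of_mem f hx)
    exact fun x hx => h hx
  · exact Submodule.span_mono (Set.image_mono Submodule.subset_span)

lemma zspan_countable (f : M →ₗ[A] P) {I : Type*} (Mi : I → Submodule A M)
    (hcg : ∀ i, ∃ g : Set M, g.Countable ∧ Submodule.span A g = Mi i)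
    (s : Set I) (hs : s.Countable) :
    ∃ C : Set P, C.Countable ∧ Submodule.span L C = zspan f Mi s := by
  choose g hgc hgspan using hcg
  refine ⟨⇑f '' ⋃ i ∈ s, g i, (hs.biUnion fun i _ => hgc i).image _, ?_⟩
  have h1 : (⨆ i ∈ s, Mi i) = Submodule.span A (⋃ i ∈ s, g i) := by
    rw [Submodule.span_iUnion₂]
    exact (iSup_congr fun i => iSup_congr fun _ => (hgspan i).symm)
  rw [zspan, h1, span_image_span]

lemma zspan_absorb (f : M →ₗ[A] P) {I : Type*} (Mi : I → Submodule A M)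
    (htop : ⨆ i, Mi i = ⊤)
    (hsurj : ∀ p : P, ∃ (m : M) (u : L), IsUnit u ∧ u • p = f m)
    (C : Set P) (hC : C.Countable) :
    ∃ s : Set I, s.Countable ∧ C ⊆ ↑(zspan (L := L) f Mi s) := by
  choose m u hu hum using hsurj
  have hmem : ∀ p : P, ∃ t : Finset I, m p ∈ ⨆ i ∈ t, Mi i := by
    intro p
    have : m p ∈ ⨆ i, Mi i := htop ▸ Submodule.mem_top
    exact Submodule.mem_iSup_iff_exists_finset.mp this
  choose t ht using hmem
  refine ⟨⋃ p ∈ C, ↑(t p), hC.biUnion fun p _ => (t p).countable_toSet, ?_⟩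
  intro p hp
  have h1 : m p ∈ ⨆ i ∈ ⋃ q ∈ C, (↑(t q) : Set I), Mi i := by
    have hle : (⨆ i ∈ t p, Mi i) ≤ ⨆ i ∈ ⋃ q ∈ C, (↑(t q) : Set I), Mi i :=
      biSup_mono fun i hi => Set.mem_biUnion hp hi
    exact hle (ht p)
  have h2 : f (m p) ∈ zspan (L := L) f Mi (⋃ q ∈ C, ↑(t q)) :=
    Submodule.subset_span (Set.mem_image_of_mem _ h1)
  have h3 : (u p) • p ∈ zspan (L := L) f Mi (⋃ q ∈ C, ↑(t q)) := (hum p) ▸ h2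
  have h4 : ((hu p).unit⁻¹ : Lˣ) • ((u p) • p) ∈ zspan (L := L) f Mi (⋃ q ∈ C, ↑(t q)) :=
    Submodule.smul_mem _ _ h3
  have h5 : ((hu p).unit⁻¹ : Lˣ) • ((u p) • p) = p := by
    rw [Units.smul_def, smul_smul]
    have : (((hu p).unit⁻¹ : Lˣ) : L) * u p = 1 := by
      have := (hu p).unit.inv_mul
      simpa [IsUnit.unit_spec] using this
    rw [this, one_smul]
  rwa [h5] at h4

lemma zspan_iUnion_seq (f : M →ₗ[A] P) {I : Type*} (Mi : I → Submodule A M)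
    (s : ℕ → Set I) (hmono : Monotone s) :
    zspan (L := L) f Mi (⋃ n, s n) = ⨆ n, zspan (L := L) f Mi (s n) := by
  have h1 : (⨆ i ∈ ⋃ n, s n, Mi i) = ⨆ n, ⨆ i ∈ s n, Mi i := iSup_iUnion s Mi
  have hmono2 : Monotone fun n => ⨆ i ∈ s n, Mi i := fun a b hab => biSup_mono (hmono hab)
  have h2 : ((⨆ n, ⨆ i ∈ s n, Mi i : Submodule A M) : Set M)
      = ⋃ n, ((⨆ i ∈ s n, Mi i : Submodule A M) : Set M) :=
    Submodule.coe_iSup_of_chain ⟨fun n => ⨆ i ∈ s n, Mi i, hmono2⟩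
  rw [zspan, h1, h2, Set.image_iUnion, Submodule.span_iUnion]
  rfl

end zigzag
/-- zig-zag lemma. If `M = ⊕_{i ∈ I} M_i` and `N = ⊕_{j ∈ J} N_j` are internal
direct sums of countably generated submodules, then any countable subsets `I₀ ⊆ I`,
`J₀ ⊆ J` are contained in countable subsets `Ī ⊆ I`, `J̄ ⊆ J` such that the `L`-submodule
of `P` generated by `σ(Σ_{i ∈ Ī} M_i)` equals the one generated by `τ(Σ_{j ∈ J̄} N_j)`. -/
theorem stmt0 {k : Type*} [Field k]
    {M N P : Type*} [AddCommGroup M] [Module (Polynomial k) M]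
    [AddCommGroup N] [Module (RPrime k) N]
    [AddCommGroup P] [Module (LaurentPolynomial k) P]
    [Module (Polynomial k) P] [IsScalarTower (Polynomial k) (LaurentPolynomial k) P]
    [Module (RPrime k) P] [IsScalarTower (RPrime k) (LaurentPolynomial k) P]
    (σ : M →ₗ[Polynomial k] P) (τ : N →ₗ[RPrime k] P)
    [IsLocalizedModule (Submonoid.powers (Polynomial.X : Polynomial k)) σ]
    [IsLocalizedModule (Submonoid.powers (Yvar k)) τ]
    {I J : Type*} (Mi : I → Submodule (Polynomial k) M) (Nj : J → Submodule (RPrime k) N)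
    (hMind : iSupIndep Mi) (hMtop : ⨆ i, Mi i = ⊤)
    (hNind : iSupIndep Nj) (hNtop : ⨆ j, Nj j = ⊤)
    (hMcg : ∀ i, ∃ s : Set M, s.Countable ∧ Submodule.span (Polynomial k) s = Mi i)
    (hNcg : ∀ j, ∃ s : Set N, s.Countable ∧ Submodule.span (RPrime k) s = Nj j)
    (I₀ : Set I) (J₀ : Set J) (hI₀ : I₀.Countable) (hJ₀ : J₀.Countable) :
    ∃ (Ibar : Set I) (Jbar : Set J), Ibar.Countable ∧ Jbar.Countable ∧
      I₀ ⊆ Ibar ∧ J₀ ⊆ Jbar ∧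
      Submodule.span (LaurentPolynomial k) (σ '' ↑(⨆ i ∈ Ibar, Mi i)) =
        Submodule.span (LaurentPolynomial k) (τ '' ↑(⨆ j ∈ Jbar, Nj j)) := by
  classical
  -- surjectivity-up-to-units for σ
  have hsurjσ : ∀ p : P, ∃ (m : M) (u : LaurentPolynomial k), IsUnit u ∧ u • p = σ m := by
    intro p
    obtain ⟨⟨m, t⟩, ht⟩ :=
      IsLocalizedModule.surj (Submonoid.powers (Polynomial.X : Polynomial k)) σ p
    refine ⟨m, algebraMap (Polynomial k) (LaurentPolynomial k) (t : Polynomial k), ?_, ?_⟩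
    · obtain ⟨n, hn⟩ := t.2
      rw [← hn, map_pow, LaurentPolynomial.algebraMap_eq_toLaurent, Polynomial.toLaurent_X]
      exact (LaurentPolynomial.isUnit_T 1).pow n
    · rw [algebraMap_smul]; exact ht
  have hsurjτ : ∀ p : P, ∃ (n : N) (u : LaurentPolynomial k), IsUnit u ∧ u • p = τ n := by
    intro p
    obtain ⟨⟨n, t⟩, ht⟩ := IsLocalizedModule.surj (Submonoid.powers (Yvar k)) τ p
    refine ⟨n, algebraMap (RPrime k) (LaurentPolynomial k) (t : RPrime k), ?_, ?_⟩
    · obtain ⟨m, hm⟩ := t.2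
      rw [← hm, map_pow]
      have hY : algebraMap (RPrime k) (LaurentPolynomial k) (Yvar k)
          = LaurentPolynomial.T (-1) := by
        change (Polynomial.aeval (LaurentPolynomial.T (-1) : LaurentPolynomial k)) (Polynomial.X : Polynomial k) = _
        exact Polynomial.aeval_X _
      rw [hY]
      exact (LaurentPolynomial.isUnit_T (-1)).pow m
    · rw [algebraMap_smul]; exact ht
  -- one zig and one zag step
  have stepJ : ∀ s : Set I, s.Countable →
      ∃ t : Set J, t.Countable ∧ zspan (L := LaurentPolynomial k) σ Mi s ≤ zspan τ Nj t := by
    intro s hs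
    obtain ⟨C, hCc, hCspan⟩ := zspan_countable (L := LaurentPolynomial k) σ Mi hMcg s hs
    obtain ⟨t, htc, hsub⟩ := zspan_absorb (L := LaurentPolynomial k) τ Nj hNtop hsurjτ C hCc
    exact ⟨t, htc, by rw [← hCspan]; exact Submodule.span_le.mpr hsub⟩
  have stepI : ∀ t : Set J, t.Countable →
      ∃ s : Set I, s.Countable ∧ zspan (L := LaurentPolynomial k) τ Nj t ≤ zspan σ Mi s := by
    intro t htc
    obtain ⟨C, hCc, hCspan⟩ := zspan_countable (L := LaurentPolynomial k) τ Nj hNcg t htc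
    obtain ⟨s, hsc, hsub⟩ := zspan_absorb (L := LaurentPolynomial k) σ Mi hMtop hsurjσ C hCc
    exact ⟨s, hsc, by rw [← hCspan]; exact Submodule.span_le.mpr hsub⟩
  set F : Set I → Set J := fun s =>
    if h : s.Countable then (stepJ s h).choose else ∅ with hF
  set G : Set J → Set I := fun t =>
    if h : t.Countable then (stepI t h).choose else ∅ with hG
  have hFc : ∀ s : Set I, s.Countable → (F s).Countable := by
    intro s h; rw [hF]; simp only [dif_pos h]; exact (stepJ s h).choose_spec.1
  have hFle : ∀ s : Set I, s.Countable → zspan (L := LaurentPolynomial k) σ Mi s ≤ zspan τ Nj (F s) := by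
    intro s h; rw [hF]; simp only [dif_pos h]; exact (stepJ s h).choose_spec.2
  have hGc : ∀ t : Set J, t.Countable → (G t).Countable := by
    intro t h; rw [hG]; simp only [dif_pos h]; exact (stepI t h).choose_spec.1
  have hGle : ∀ t : Set J, t.Countable → zspan (L := LaurentPolynomial k) τ Nj t ≤ zspan σ Mi (G t) := by
    intro t h; rw [hG]; simp only [dif_pos h]; exact (stepI t h).choose_spec.2
  -- the zig-zag sequence
  set seq : ℕ → Set I × Set J := fun n =>
    Nat.rec (I₀, J₀) (fun _ p => (p.1 ∪ G (p.2 ∪ F p.1), p.2 ∪ F p.1)) n with hseq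
  set In : ℕ → Set I := fun n => (seq n).1 with hIn
  set Jn : ℕ → Set J := fun n => (seq n).2 with hJn
  have hInsucc : ∀ n, In (n + 1) = In n ∪ G (Jn n ∪ F (In n)) := fun n => rfl
  have hJnsucc : ∀ n, Jn (n + 1) = Jn n ∪ F (In n) := fun n => rfl
  have hcnt : ∀ n, (In n).Countable ∧ (Jn n).Countable := by
    intro n
    induction n with
    | zero => exact ⟨hI₀, hJ₀⟩
    | succ n ih =>
      have hJ' : (Jn n ∪ F (In n)).Countable := ih.2.union (hFc _ ih.1)
      exact ⟨(hInsucc n) ▸ ih.1.union (hGc _ hJ'), (hJnsucc n) ▸ hJ'⟩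
  have hImono : Monotone In := by
    apply monotone_nat_of_le_succ
    intro n; rw [hInsucc]; exact Set.subset_union_left
  have hJmono : Monotone Jn := by
    apply monotone_nat_of_le_succ
    intro n; rw [hJnsucc]; exact Set.subset_union_left
  have hAB : ∀ n, zspan (L := LaurentPolynomial k) σ Mi (In n) ≤ zspan τ Nj (Jn (n + 1)) := by
    intro n
    refine le_trans (hFle (In n) (hcnt n).1) ?_
    rw [hJnsucc]
    exact zspan_mono τ Nj Set.subset_union_right
  have hBA : ∀ n, zspan (L := LaurentPolynomial k) τ Nj (Jn (n + 1)) ≤ zspan σ Mi (In (n + 1)) := by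
    intro n
    have hJ' : (Jn n ∪ F (In n)).Countable := (hcnt n).2.union (hFc _ (hcnt n).1)
    refine le_trans ?_ ((hInsucc n) ▸ zspan_mono σ Mi Set.subset_union_right)
    exact hGle _ ((hJnsucc n) ▸ hJ')
  refine ⟨⋃ n, In n, ⋃ n, Jn n, Set.countable_iUnion (fun n => (hcnt n).1),
    Set.countable_iUnion (fun n => (hcnt n).2),
    Set.subset_iUnion In 0, Set.subset_iUnion Jn 0, ?_⟩
  have e1 : Submodule.span (LaurentPolynomial k) (σ '' ↑(⨆ i ∈ ⋃ n, In n, Mi i))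
      = zspan σ Mi (⋃ n, In n) := rfl
  have e2 : Submodule.span (LaurentPolynomial k) (τ '' ↑(⨆ j ∈ ⋃ n, Jn n, Nj j))
      = zspan τ Nj (⋃ n, Jn n) := rfl
  rw [e1, e2, zspan_iUnion_seq σ Mi In hImono, zspan_iUnion_seq τ Nj Jn hJmono]
  apply le_antisymm
  · exact iSup_le fun n => le_trans (hAB n) (le_iSup (fun n => zspan (L := LaurentPolynomial k) τ Nj (Jn n)) (n + 1))
  · refine iSup_le fun n => ?_
    refine le_trans (zspan_mono τ Nj (hJmono (Nat.le_succ n))) ?_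
    exact le_trans (hBA n) (le_iSup (fun n => zspan (L := LaurentPolynomial k) σ Mi (In n)) (n + 1))
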